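/- arXiv:1303.1659 — 2 statements merged into one kernel-verified Lean document; each statement's English description precedes it below -/
import Mathlib

section
/- Let D be a Hadamard difference set with parameters (v,k,λ) = (4n, 2n - √n, n - √n) in an abelian group G, with three nontrivial character values √n, a, ā satisfying a + ā = 0. Let H = G + 1_G - D - D^{(-1)} as a subset of G. Then H² = (2√n - 1)·1_G + (2 - 2√n)·H + 2·G in ℤ[G], and consequently √n ≤ 2. -/
open Finset

/-- `D` is a `(v,k,λ)` difference set. -/
def IsDiffSet {G : Type*} [Group G] [DecidableEq G] (D : Finset G) (l : ℕ) : Prop :=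
  ∀ g : G, g ≠ 1 → ((D ×ˢ D).filter (fun p => p.1 * p.2⁻¹ = g)).card = l

section aux
variable {G : Type*} [CommGroup G] [Fintype G] [DecidableEq G]

noncomputable def ev (χ : G →* ℂ) : MonoidAlgebra ℤ G →ₐ[ℤ] ℂ := MonoidAlgebra.lift ℤ ℂ G χ

lemma ev_eq_sum (χ : G →* ℂ) (x : MonoidAlgebra ℤ G) :
    ev χ x = ∑ g : G, (x.coeff g : ℂ) * χ g := by
  rw [ev, MonoidAlgebra.lift_apply, Finsupp.sum_fintype _ _ (fun a => by simp)]
  simp [zsmul_eq_mul]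

lemma ev_single (χ : G →* ℂ) (g : G) (c : ℤ) :
    ev χ (MonoidAlgebra.single g c) = (c : ℂ) * χ g := by
  rw [ev, MonoidAlgebra.lift_single, zsmul_eq_mul]

lemma ev_zero_all (x : MonoidAlgebra ℤ G) (h : ∀ χ : G →* ℂ, ev χ x = 0) : x = 0 := by
  have key : ∀ g : G, x.coeff g = 0 := by
    intro g0
    let T : (Additive G → ℂ) →ₗ[ℂ] ℂ :=
      { toFun := fun f => ∑ g : G, (x.coeff g : ℂ) * f (Additive.ofMul g)
        map_add' := fun f₁ f₂ => by simp [mul_add, Finset.sum_add_distrib]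
        map_smul' := fun c f => by
          simp only [Pi.smul_apply, smul_eq_mul, RingHom.id_apply, Finset.mul_sum]
          exact Finset.sum_congr rfl fun i _ => by ring }
    have hT : T = 0 := by
      apply (AddChar.complexBasis (Additive G)).ext
      intro ψ
      have : T ((AddChar.complexBasis (Additive G)) ψ) = T ⇑ψ := by
        rw [AddChar.complexBasis_apply]
      rw [this]
      let χ : G →* ℂ :=
        { toFun := fun g => ψ (Additive.ofMul g)
          map_one' := ψ.map_zero_eq_one
          map_mul' := fun a b => ψ.map_add_eq_mul a b }
      have : T ⇑ψ = ev χ x := by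
        rw [ev_eq_sum]; rfl
      rw [this, h χ]; rfl
    classical
    set e : Additive G → ℂ := fun h => if h = Additive.ofMul g0 then 1 else 0 with he
    have := congrArg (fun f => f e) hT
    simp only [LinearMap.zero_apply] at this
    have h2 : T e = (x.coeff g0 : ℂ) := by
      have hTdef : T e = ∑ g : G, (x.coeff g : ℂ) * e (Additive.ofMul g) := rfl
      rw [hTdef, Finset.sum_eq_single g0]
      · simp [he]
      · intro b _ hb
        have : e (Additive.ofMul b) = 0 := by
          rw [he]; exact if_neg (by simpa using hb)
        rw [this, mul_zero]
      · simp
    rw [h2] at this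
    exact_mod_cast this
  ext g; simp [key g]

lemma sum_char_eq_zero (χ : G →* ℂ) (hχ : χ ≠ 1) : ∑ g : G, χ g = 0 := by
  obtain ⟨g0, hg0⟩ : ∃ g, χ g ≠ 1 := by
    by_contra h
    push_neg at h
    exact hχ (MonoidHom.ext fun g => (h g).trans rfl)
  have h1 : χ g0 * ∑ g : G, χ g = ∑ g : G, χ g := by
    rw [Finset.mul_sum]
    simp_rw [← map_mul]
    exact Fintype.sum_bijective (fun g => g0 * g) (Group.mulLeft_bijective g0) _ _ (fun g => rfl)
  have h2 : (χ g0 - 1) * ∑ g : G, χ g = 0 := by rw [sub_mul, one_mul, h1, sub_self]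
  rcases mul_eq_zero.mp h2 with h | h
  · exact absurd (by linear_combination h) hg0
  · exact h

lemma char_inv (χ : G →* ℂ) (g : G) : χ g⁻¹ = (starRingEnd ℂ) (χ g) := by
  have h1 : χ g ^ Fintype.card G = 1 := by rw [← map_pow, pow_card_eq_one, map_one]
  have hn : ‖χ g‖ = 1 := Complex.norm_eq_one_of_pow_eq_one h1 Fintype.card_ne_zero
  have h2 : χ g * χ g⁻¹ = 1 := by rw [← map_mul, mul_inv_cancel, map_one]
  rw [eq_inv_of_mul_eq_one_right h2, Complex.inv_eq_conj hn]

end aux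

section aux2
variable {G : Type*} [CommGroup G] [Fintype G] [DecidableEq G]

lemma mul_coeff (f h : MonoidAlgebra ℤ G) (z : G) :
    (f * h).coeff z = ∑ x : G, f.coeff x * h.coeff (x⁻¹ * z) := by
  rw [MonoidAlgebra.coeff_mul, Finsupp.sum_fintype _ _ (fun a => by simp [Finsupp.sum])]
  refine Finset.sum_congr rfl fun x _ => ?_
  rw [Finsupp.sum_fintype _ _ (fun a => by simp)]
  simp_rw [← eq_inv_mul_iff_mul_eq]
  rw [Finset.sum_ite_eq' Finset.univ (x⁻¹ * z) (fun y => f.coeff x * h.coeff y)]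
  simp

lemma σ_coeff (g : G) : (∑ x : G, MonoidAlgebra.single x (1 : ℤ)).coeff g = 1 := by
  rw [MonoidAlgebra.coeff_sum, Finsupp.finset_sum_apply]
  simp_rw [MonoidAlgebra.coeff_single, Finsupp.single_apply]
  rw [Finset.sum_ite_eq' Finset.univ g (fun _ => (1:ℤ))]
  simp

lemma δ_coeff (D : Finset G) (g : G) :
    (∑ d ∈ D, MonoidAlgebra.single d (1 : ℤ)).coeff g = if g ∈ D then 1 else 0 := by
  rw [MonoidAlgebra.coeff_sum, Finsupp.finset_sum_apply]
  simp_rw [MonoidAlgebra.coeff_single, Finsupp.single_apply]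
  rw [Finset.sum_ite_eq' D g (fun _ => (1:ℤ))]

lemma δ'_coeff (D : Finset G) (g : G) :
    (∑ d ∈ D, MonoidAlgebra.single d⁻¹ (1 : ℤ)).coeff g = if g⁻¹ ∈ D then 1 else 0 := by
  rw [MonoidAlgebra.coeff_sum, Finsupp.finset_sum_apply]
  simp_rw [MonoidAlgebra.coeff_single, Finsupp.single_apply, inv_eq_iff_eq_inv]
  rw [Finset.sum_ite_eq' D g⁻¹ (fun _ => (1:ℤ))]

lemma int_le_self_mul (t : ℤ) : t ≤ t * t := by
  rcases le_or_gt t 0 with h | h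
  · nlinarith
  · nlinarith

end aux2

/-- Let `D` be a Hadamard difference set with parameters `(4n, 2n-√n, n-√n)` in an
abelian group `G`, with exactly three nontrivial character values `√n, a, ā` where
`a + ā = 0`. With `H = G + 1 - D - D^{(-1)}` in `ℤ[G]`, one has
`H² = (2√n - 1)·1 + (2 - 2√n)·H + 2·G`, and consequently `√n ≤ 2`. -/
theorem hadamard_minus_case {G : Type*} [CommGroup G] [Fintype G] [DecidableEq G]
    (D : Finset G) (v k lam n r : ℕ) (hr : r ^ 2 = n) (hrpos : 0 < r)
    (hv : Fintype.card G = v) (hk : D.card = k) (hDS : IsDiffSet D lam)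
    (hv4 : v = 4 * n) (hkn : k = 2 * n - r) (hlam : lam = n - r)
    (a : ℂ) (ha : a * (starRingEnd ℂ) a = (n : ℂ)) (haa : a + (starRingEnd ℂ) a = 0)
    (hvals : {z : ℂ | ∃ χ : G →* ℂ, χ ≠ 1 ∧ ∑ d ∈ D, χ d = z}
      = {(r : ℂ), a, (starRingEnd ℂ) a})
    (h3 : ({(r : ℂ), a, (starRingEnd ℂ) a} : Set ℂ).ncard = 3)
    (H : MonoidAlgebra ℤ G)
    (hH : H = (∑ g : G, MonoidAlgebra.single g (1 : ℤ)) + 1 -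
        (∑ d ∈ D, MonoidAlgebra.single d (1 : ℤ)) -
        (∑ d ∈ D, MonoidAlgebra.single d⁻¹ (1 : ℤ))) :
    H ^ 2 = (2 * (r : ℤ) - 1) • (1 : MonoidAlgebra ℤ G) +
        (2 - 2 * (r : ℤ)) • H +
        (2 : ℤ) • (∑ g : G, MonoidAlgebra.single g (1 : ℤ)) ∧
      r ≤ 2 := by
  set σ : MonoidAlgebra ℤ G := ∑ g : G, MonoidAlgebra.single g (1 : ℤ) with hσ
  set δ : MonoidAlgebra ℤ G := ∑ d ∈ D, MonoidAlgebra.single d (1 : ℤ) with hδ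
  set δ' : MonoidAlgebra ℤ G := ∑ d ∈ D, MonoidAlgebra.single d⁻¹ (1 : ℤ) with hδ'
  have hr2n : r ≤ 2 * n := by nlinarith [hr]
  have hkC : (k : ℂ) = 2 * (r : ℂ) ^ 2 - r := by
    rw [hkn, Nat.cast_sub hr2n]; rw [← hr]; push_cast; ring
  have hkZ : (k : ℤ) = 2 * (r : ℤ) ^ 2 - r := by
    rw [hkn, Nat.cast_sub hr2n]; rw [← hr]; push_cast; ring
  have hvC : ((Fintype.card G : ℕ) : ℂ) = 4 * (r : ℂ) ^ 2 := by
    rw [hv, hv4, ← hr]; push_cast; ring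
  have hvZ : ((Fintype.card G : ℕ) : ℤ) = 4 * (r : ℤ) ^ 2 := by
    rw [hv, hv4, ← hr]; push_cast; ring
  -- evaluations
  have evσ : ∀ χ : G →* ℂ, ev χ σ = ∑ g : G, χ g := by
    intro χ; rw [hσ, map_sum]; simp [ev_single]
  have evδ : ∀ χ : G →* ℂ, ev χ δ = ∑ d ∈ D, χ d := by
    intro χ; rw [hδ, map_sum]; simp [ev_single]
  have evδ' : ∀ χ : G →* ℂ, ev χ δ' = (starRingEnd ℂ) (∑ d ∈ D, χ d) := by
    intro χ; rw [hδ', map_sum, map_sum]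
    refine Finset.sum_congr rfl fun d _ => ?_
    rw [ev_single, char_inv]; simp
  have evH : ∀ χ : G →* ℂ, ev χ H =
      (∑ g : G, χ g) + 1 - (∑ d ∈ D, χ d) - (starRingEnd ℂ) (∑ d ∈ D, χ d) := by
    intro χ
    rw [hH, map_sub, map_sub, map_add, map_one, evσ, evδ, evδ']
  -- the character-level identity
  have key : ∀ χ : G →* ℂ, ev χ (H ^ 2) =
      ev χ ((2 * (r : ℤ) - 1) • (1 : MonoidAlgebra ℤ G) + (2 - 2 * (r : ℤ)) • H +
        (2 : ℤ) • σ) := by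
    intro χ
    rw [map_pow, map_add, map_add, map_zsmul, map_zsmul, map_zsmul, map_one, evσ]
    by_cases hχ : χ = 1
    · subst hχ
      have h1 : (∑ g : G, (1 : G →* ℂ) g) = (Fintype.card G : ℂ) := by
        simp [Finset.card_univ]
      have h2 : (∑ d ∈ D, (1 : G →* ℂ) d) = (k : ℂ) := by simp [hk]
      rw [evH, h1, h2]
      simp only [map_natCast]
      rw [hvC, hkC]
      simp only [zsmul_eq_mul]
      push_cast
      ring
    · have h0 : (∑ g : G, χ g) = 0 := sum_char_eq_zero χ hχ
      have hz : (∑ d ∈ D, χ d) ∈ ({(r : ℂ), a, (starRingEnd ℂ) a} : Set ℂ) := by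
        rw [← hvals]; exact ⟨χ, hχ, rfl⟩
      rw [evH, h0]
      simp only [zsmul_eq_mul]
      push_cast
      rcases hz with hz | hz | hz
      · rw [hz]
        simp only [map_natCast]
        ring
      · rw [hz]
        linear_combination (a + (starRingEnd ℂ) a - 2 * (r : ℂ)) * haa
      · rw [hz, Complex.conj_conj]
        linear_combination ((starRingEnd ℂ) a + a - 2 * (r : ℂ)) * haa
  have Eid : H ^ 2 = (2 * (r : ℤ) - 1) • (1 : MonoidAlgebra ℤ G) +
      (2 - 2 * (r : ℤ)) • H + (2 : ℤ) • σ := by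
    have h0 := ev_zero_all (H ^ 2 - ((2 * (r : ℤ) - 1) • (1 : MonoidAlgebra ℤ G) +
      (2 - 2 * (r : ℤ)) • H + (2 : ℤ) • σ)) (fun χ => by rw [map_sub, key χ, sub_self])
    exact sub_eq_zero.mp h0
  refine ⟨Eid, ?_⟩
  -- coefficient formulas
  have hc : ∀ g : G, H.coeff g = 1 + (if g = 1 then 1 else 0) - (if g ∈ D then 1 else 0) -
      (if g⁻¹ ∈ D then 1 else 0) := by
    intro g
    rw [hH, MonoidAlgebra.coeff_sub, MonoidAlgebra.coeff_sub, MonoidAlgebra.coeff_add, Finsupp.sub_apply, Finsupp.sub_apply, Finsupp.add_apply, σ_coeff, δ_coeff,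
      δ'_coeff, MonoidAlgebra.one_def, MonoidAlgebra.coeff_single, Finsupp.single_apply]
    simp only [show ((1:G) = g) = (g = 1) from propext eq_comm]
  have coeff : ∀ z : G, (∑ x : G, H.coeff x * H.coeff (x⁻¹ * z)) =
      (2 * (r : ℤ) - 1) * (if z = 1 then 1 else 0) + (2 - 2 * (r : ℤ)) * H.coeff z + 2 := by
    intro z
    have h1 := congrArg (fun f : MonoidAlgebra ℤ G => f.coeff z) Eid
    simp only [pow_two] at h1
    rw [mul_coeff] at h1
    rw [h1]
    rw [MonoidAlgebra.coeff_add, MonoidAlgebra.coeff_add, Finsupp.add_apply, Finsupp.add_apply, MonoidAlgebra.coeff_smul_apply, MonoidAlgebra.coeff_smul_apply,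
      MonoidAlgebra.coeff_smul_apply, σ_coeff]
    rw [MonoidAlgebra.one_def, MonoidAlgebra.coeff_single, Finsupp.single_apply]
    simp only [smul_eq_mul, mul_one]
    simp only [show ((1:G) = z) = (z = 1) from propext eq_comm]
  have hsym : ∀ g : G, H.coeff g⁻¹ = H.coeff g := by
    intro g; rw [hc, hc]; simp only [inv_inv, inv_eq_one]; ring
  have hsum : ∑ g : G, H.coeff g = 2 * (r : ℤ) + 1 := by
    simp only [hc]
    rw [Finset.sum_sub_distrib, Finset.sum_sub_distrib, Finset.sum_add_distrib]
    rw [Finset.sum_const, Finset.card_univ, nsmul_eq_mul, mul_one]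
    rw [Finset.sum_ite_eq' Finset.univ (1 : G) (fun _ => (1:ℤ))]
    have hd1 : (∑ g : G, if g ∈ D then (1:ℤ) else 0) = (k : ℤ) := by
      rw [Finset.sum_ite_mem, Finset.univ_inter, Finset.sum_const, hk, nsmul_eq_mul, mul_one]
    have hd2 : (∑ g : G, if g⁻¹ ∈ D then (1:ℤ) else 0) = (k : ℤ) := by
      have heq := Fintype.sum_equiv (Equiv.inv G) (fun x : G => if x⁻¹ ∈ D then (1:ℤ) else 0)
        (fun y : G => if y ∈ D then (1:ℤ) else 0) (fun x => rfl)
      rw [heq, hd1]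
    rw [hd1, hd2, hvZ]
    simp only [Finset.mem_univ, if_true]
    rw [hkZ]; ring
  have hvals4 : ∀ g : G, H.coeff g = -1 ∨ H.coeff g = 0 ∨ H.coeff g = 1 ∨ H.coeff g = 2 := by
    intro g; rw [hc g]; split_ifs <;> omega
  have e1 : ∑ x : G, H.coeff x * H.coeff x = (2 * (r : ℤ) - 1) + (2 - 2 * (r : ℤ)) * H.coeff 1 + 2 := by
    simpa [hsym] using coeff 1
  have hge : ∑ x : G, H.coeff x ≤ ∑ x : G, H.coeff x * H.coeff x :=
    Finset.sum_le_sum fun x _ => int_le_self_mul (H.coeff x)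
  have hH1 : H.coeff 1 = 0 ∨ H.coeff 1 = 2 := by
    rw [hc 1]; simp only [inv_one, if_pos rfl]; split_ifs <;> omega
  by_contra hr2
  push_neg at hr2
  have hr3 : (3 : ℤ) ≤ (r : ℤ) := by exact_mod_cast hr2
  rw [e1, hsum] at hge
  have hH10 : H.coeff 1 = 0 := by rcases hH1 with h | h <;> [exact h; nlinarith]
  rw [hH10, mul_zero, add_zero] at e1
  have hsum2 : ∑ x : G, (H.coeff x * H.coeff x - H.coeff x) = 0 := by
    rw [Finset.sum_sub_distrib, e1, hsum]; ring
  have h01 : ∀ x : G, H.coeff x = 0 ∨ H.coeff x = 1 := by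
    intro x
    have hz := (Finset.sum_eq_zero_iff_of_nonneg
      (fun y _ => sub_nonneg.mpr (int_le_self_mul (H.coeff y)))).mp hsum2 x (Finset.mem_univ x)
    rcases hvals4 x with h | h | h | h <;> rw [h] at hz <;> omega
  have hex : ∃ g : G, g ≠ 1 ∧ H.coeff g = 1 := by
    by_contra hno
    push_neg at hno
    have : ∑ x : G, H.coeff x = H.coeff 1 := by
      refine Finset.sum_eq_single_of_mem 1 (Finset.mem_univ 1) fun b _ hb => ?_
      rcases h01 b with h | h
      · exact h
      · exact absurd h (hno b hb)
    rw [hsum, hH10] at this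
    omega
  obtain ⟨g, hg1, hg⟩ := hex
  have h2 := coeff g
  rw [if_neg hg1, hg, mul_zero, mul_one] at h2
  have hnn : (0 : ℤ) ≤ ∑ x : G, H.coeff x * H.coeff (x⁻¹ * g) :=
    Finset.sum_nonneg fun x _ => mul_nonneg
      (by rcases h01 x with h | h <;> omega)
      (by rcases h01 (x⁻¹ * g) with h | h <;> omega)
  rw [h2] at hnn
  linarith
end

section
/- Let D be a difference set in a finite abelian group G with exactly three nontrivial character values √n, a, ā, and suppose M = {χ₀} ∪ {χ : χ(D) = √n} is a subgroup of Ĝ. Then v = 2(k - √n), and the parameters are (v,k,λ) = (4n, 2n + √n, n + √n); moreover a + ā = 0. -/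
open Finset

section Aux
variable {G : Type*} [CommGroup G] [Fintype G]
set_option linter.unusedSectionVars false

lemma char_mul_inv (χ : G →* ℂ) (g : G) : χ g * χ g⁻¹ = 1 := by
  rw [← map_mul, mul_inv_cancel, map_one]

lemma char_ne_zero (χ : G →* ℂ) (g : G) : χ g ≠ 0 :=
  fun h => by simpa [h] using char_mul_inv χ g

lemma char_conj (χ : G →* ℂ) (g : G) : (starRingEnd ℂ) (χ g) = χ g⁻¹ := by
  have h1 := char_mul_inv χ g
  have hN : χ g ^ (Fintype.card G) = 1 := by rw [← map_pow, pow_card_eq_one, map_one]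
  have habs : ‖χ g‖ = 1 := Complex.norm_eq_one_of_pow_eq_one hN Fintype.card_ne_zero
  have h2 : χ g * (starRingEnd ℂ) (χ g) = 1 := by
    rw [Complex.mul_conj, Complex.normSq_eq_norm_sq]
    simp [Complex.norm_def] at habs ⊢
    simp [habs]
  exact mul_left_cancel₀ (char_ne_zero χ g) (h2.trans h1.symm)

lemma char_sum_eq_zero {χ : G →* ℂ} (hχ : χ ≠ 1) : ∑ g : G, χ g = 0 := by
  obtain ⟨g₀, hg₀⟩ : ∃ g₀, χ g₀ ≠ 1 := by
    by_contra h; push_neg at h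
    exact hχ (MonoidHom.ext fun g => by simp [h g])
  have h2 : ∑ g : G, χ (g₀ * g) = ∑ g : G, χ g :=
    Fintype.sum_equiv (Equiv.mulLeft g₀) _ _ (fun g => rfl)
  have h3 : χ g₀ * ∑ g : G, χ g = ∑ g : G, χ g := by
    rw [Finset.mul_sum, ← h2]; simp [map_mul]
  have h4 : (χ g₀ - 1) * ∑ g : G, χ g = 0 := by linear_combination h3
  rcases mul_eq_zero.mp h4 with h | h
  · exact absurd (sub_eq_zero.mp h) hg₀
  · exact h

noncomputable def charInv (χ : G →* ℂ) : G →* ℂ := χ.comp (MulEquiv.inv G).toMonoidHom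

lemma charInv_apply (χ : G →* ℂ) (g : G) : charInv χ g = χ g⁻¹ := rfl

lemma charInv_mul (χ : G →* ℂ) : charInv χ * χ = 1 :=
  MonoidHom.ext fun g => by
    simp only [MonoidHom.mul_apply, charInv_apply, MonoidHom.one_apply]
    rw [mul_comm]; exact char_mul_inv χ g

noncomputable def mulLeftCharEquiv (χ₀ : G →* ℂ) : (G →* ℂ) ≃ (G →* ℂ) where
  toFun χ := χ₀ * χ
  invFun χ := charInv χ₀ * χ
  left_inv χ := by
    show charInv χ₀ * (χ₀ * χ) = χ; rw [← mul_assoc, charInv_mul, one_mul]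
  right_inv χ := by
    show χ₀ * (charInv χ₀ * χ) = χ
    rw [← mul_assoc, mul_comm χ₀ (charInv χ₀), charInv_mul, one_mul]

variable [Fintype (G →* ℂ)] [DecidableEq G]

lemma dual_sum (hsep : ∀ h : G, h ≠ 1 → ∃ χ : G →* ℂ, χ h ≠ 1) {h : G} (hh : h ≠ 1) :
    ∑ χ : G →* ℂ, χ h = 0 := by
  obtain ⟨χ₀, hχ₀⟩ := hsep h hh
  have h2 : ∑ χ : G →* ℂ, (χ₀ * χ) h = ∑ χ : G →* ℂ, χ h :=
    Fintype.sum_equiv (mulLeftCharEquiv χ₀) _ _ fun χ => rfl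
  have h3 : χ₀ h * ∑ χ : G →* ℂ, χ h = ∑ χ : G →* ℂ, χ h := by
    rw [Finset.mul_sum, ← h2]; rfl
  have h4 : (χ₀ h - 1) * ∑ χ : G →* ℂ, χ h = 0 := by linear_combination h3
  rcases mul_eq_zero.mp h4 with h' | h'
  · exact absurd (sub_eq_zero.mp h') hχ₀
  · exact h'

lemma dual_orth (hsep : ∀ h : G, h ≠ 1 → ∃ χ : G →* ℂ, χ h ≠ 1) (d g : G) :
    ∑ χ : G →* ℂ, χ d * χ g⁻¹ = if d = g then (Fintype.card (G →* ℂ) : ℂ) else 0 := by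
  have he : ∀ χ : G →* ℂ, χ d * χ g⁻¹ = χ (d * g⁻¹) := fun χ => (map_mul χ d g⁻¹).symm
  simp_rw [he]
  by_cases hdg : d = g
  · subst hdg
    simp only [mul_inv_cancel, map_one, eq_self_iff_true, Finset.sum_const,
      Finset.card_univ, nsmul_eq_mul, mul_one, if_true]
  · rw [if_neg hdg, dual_sum hsep (by rwa [ne_eq, mul_inv_eq_one])]

end Aux

set_option maxHeartbeats 2000000 in
/-- Let `D` be a `(v,k,λ)` difference set of order `n = k - λ` with exactly the three
nontrivial character values `√n, a, ā`, and suppose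
`M = {χ₀} ∪ {χ : χ(D) = √n}` is a subgroup of the character group `Ĝ` (i.e. closed
under multiplication and inversion). Then `v = 2(k - √n)`, the parameters are
`(v,k,λ) = (4n, 2n+√n, n+√n)`, and `a + ā = 0`. -/
theorem M_subgroup_case {G : Type*} [CommGroup G] [Fintype G] [DecidableEq G]
    (D : Finset G) (v k lam n : ℕ) (hv : Fintype.card G = v)
    (hk : D.card = k) (hDS : IsDiffSet D lam) (hlam : 0 < lam) (hlk : lam < k)
    (hn : n = k - lam)
    (r : ℕ) (hr : r ^ 2 = n)
    (a : ℂ) (ha : a * (starRingEnd ℂ) a = (n : ℂ)) (haa : a ≠ (starRingEnd ℂ) a)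
    (hvals : {z : ℂ | ∃ χ : G →* ℂ, χ ≠ 1 ∧ ∑ d ∈ D, χ d = z}
      = {(r : ℂ), a, (starRingEnd ℂ) a})
    (h3 : ({(r : ℂ), a, (starRingEnd ℂ) a} : Set ℂ).ncard = 3)
    (M : Set (G →* ℂ))
    (hM : M = {1} ∪ {χ : G →* ℂ | χ ≠ 1 ∧ ∑ d ∈ D, χ d = (r : ℂ)})
    (hMmul : ∀ χ ∈ M, ∀ ψ ∈ M, χ * ψ ∈ M)
    (hMinv : ∀ χ ∈ M, χ.comp (MulEquiv.inv G).toMonoidHom ∈ M) :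
    (v : ℤ) = 2 * ((k : ℤ) - (r : ℤ)) ∧
      v = 4 * n ∧ k = 2 * n + r ∧ lam = n + r ∧
      a + (starRingEnd ℂ) a = 0 := by
  classical
  -- ## Setup: the dual group is finite of cardinality `v`, and separates points
  obtain ⟨e⟩ := CommGroup.monoidHom_mulEquiv_of_hasEnoughRootsOfUnity G ℂ
  let uE : (G →* ℂ) ≃ (G →* ℂˣ) :=
    { toFun := MonoidHom.toHomUnits
      invFun := fun φ => (Units.coeHom ℂ).comp φ
      left_inv := fun f => MonoidHom.ext fun g => rfl
      right_inv := fun φ => MonoidHom.ext fun g => Units.ext rfl }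
  let E : (G →* ℂ) ≃ G := uE.trans e.toEquiv
  haveI : Fintype (G →* ℂ) := Fintype.ofEquiv G E.symm
  have hcard : Fintype.card (G →* ℂ) = v := by rw [← hv]; exact Fintype.card_congr E
  have hsep : ∀ h : G, h ≠ 1 → ∃ χ : G →* ℂ, χ h ≠ 1 := by
    intro h hh
    obtain ⟨φ, hφ⟩ := CommGroup.exists_apply_ne_one_of_hasEnoughRootsOfUnity G ℂ hh
    exact ⟨(Units.coeHom ℂ).comp φ, fun hc => hφ (Units.ext hc)⟩
  -- ## Notation
  set c : ℂ := (starRingEnd ℂ) a with hc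
  set cD : (G →* ℂ) → ℂ := fun χ => ∑ d ∈ D, χ d with hcDdef
  set s : ℂ := a + c with hsdef
  -- distinctness of the three values
  have hra : (r : ℂ) ≠ a := by
    intro h
    rw [← h] at h3
    have h4 : ({(r : ℂ), (r : ℂ), c} : Set ℂ) = {(r : ℂ), c} := by
      simp [Set.insert_comm]
    rw [h4] at h3
    have := Set.ncard_insert_le (r : ℂ) ({c} : Set ℂ)
    rw [h3, Set.ncard_singleton] at this
    omega
  have hrc : (r : ℂ) ≠ c := by
    intro h
    rw [← h] at h3
    have h4 : ({(r : ℂ), a, (r : ℂ)} : Set ℂ) = {(r : ℂ), a} := by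
      rw [Set.insert_comm]
      simp [Set.pair_comm]
    rw [h4] at h3
    have := Set.ncard_insert_le (r : ℂ) ({a} : Set ℂ)
    rw [h3, Set.ncard_singleton] at this
    omega
  have hvals' : ∀ χ : G →* ℂ, χ ≠ 1 → cD χ = (r : ℂ) ∨ cD χ = a ∨ cD χ = c := by
    intro χ hχ
    have : cD χ ∈ ({(r : ℂ), a, c} : Set ℂ) := by
      rw [← hvals]; exact ⟨χ, hχ, rfl⟩
    simpa [Set.mem_insert_iff, Set.mem_singleton_iff] using this
  -- membership in M
  have hMmem : ∀ χ : G →* ℂ, χ ∈ M ↔ (χ = 1 ∨ (χ ≠ 1 ∧ cD χ = (r : ℂ))) := by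
    intro χ; rw [hM]; simp [Set.mem_union, Set.mem_setOf_eq, cD]
  have h1M : (1 : G →* ℂ) ∈ M := (hMmem 1).mpr (Or.inl rfl)
  set Mf : Finset (G →* ℂ) := Set.toFinset M with hMfdef
  have hMf : ∀ χ, χ ∈ Mf ↔ χ ∈ M := fun χ => Set.mem_toFinset
  have hm1 : (1 : G →* ℂ) ∈ Mf := (hMf 1).mpr h1M
  set m : ℕ := Mf.card with hmdef
  set T : G → ℂ := fun g => ∑ χ ∈ Mf, χ g with hTdef
  -- `m ≥ 2`
  have hm2 : 2 ≤ m := by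
    have : (r : ℂ) ∈ {z : ℂ | ∃ χ : G →* ℂ, χ ≠ 1 ∧ ∑ d ∈ D, χ d = z} := by
      rw [hvals]; exact Set.mem_insert _ _
    obtain ⟨χr, hχr1, hχrD⟩ := this
    have hχrM : χr ∈ Mf := (hMf χr).mpr ((hMmem χr).mpr (Or.inr ⟨hχr1, hχrD⟩))
    exact Finset.one_lt_card.mpr ⟨1, hm1, χr, hχrM, fun h => hχr1 h.symm⟩
  have hm0 : (0 : ℕ) < m := by omega
  -- `m < v`
  have hmv : m < v := by
    have : a ∈ {z : ℂ | ∃ χ : G →* ℂ, χ ≠ 1 ∧ ∑ d ∈ D, χ d = z} := by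
      rw [hvals]; exact Set.mem_insert_iff.mpr (Or.inr (Set.mem_insert _ _))
    obtain ⟨χa, hχa1, hχaD⟩ := this
    have hχaM : χa ∉ Mf := by
      rw [hMf, hMmem]
      push_neg
      refine ⟨hχa1, fun _ h => hra ?_⟩
      rw [← h]; exact hχaD
    have : Mf ≠ Finset.univ := fun h => hχaM (h ▸ Finset.mem_univ χa)
    have h5 := Finset.card_lt_iff_ne_univ Mf |>.mpr this
    rw [hcard] at h5
    exact h5
  -- values of T
  have hT1 : T 1 = (m : ℂ) := by simp [hTdef, hmdef]
  have hTval : ∀ g : G, T g = 0 ∨ T g = (m : ℂ) := by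
    intro g
    by_cases hall : ∀ χ ∈ Mf, χ g = 1
    · right
      rw [hTdef]
      simp only
      rw [Finset.sum_congr rfl hall, Finset.sum_const, nsmul_eq_mul, mul_one]
    · left
      push_neg at hall
      obtain ⟨χ₀, hχ₀M, hχ₀g⟩ := hall
      have hreindex : ∑ χ ∈ Mf, (χ₀ * χ) g = ∑ χ ∈ Mf, χ g := by
        refine Finset.sum_nbij' (fun χ => χ₀ * χ) (fun χ => charInv χ₀ * χ) ?_ ?_ ?_ ?_ ?_
        · intro χ hχ
          exact (hMf _).mpr (hMmul _ ((hMf _).mp hχ₀M) _ ((hMf _).mp hχ))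
        · intro χ hχ
          exact (hMf _).mpr
            (hMmul _ (hMinv χ₀ ((hMf _).mp hχ₀M)) _ ((hMf _).mp hχ))
        · intro χ _
          show charInv χ₀ * (χ₀ * χ) = χ
          rw [← mul_assoc, charInv_mul, one_mul]
        · intro χ _
          show χ₀ * (charInv χ₀ * χ) = χ
          rw [← mul_assoc, mul_comm χ₀ (charInv χ₀), charInv_mul, one_mul]
        · intro χ _
          rfl
      have h3' : χ₀ g * T g = T g := by
        rw [hTdef]
        simp only
        rw [Finset.mul_sum, ← hreindex]
        rfl
      have h4 : (χ₀ g - 1) * T g = 0 := by linear_combination h3'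
      rcases mul_eq_zero.mp h4 with h' | h'
      · exact absurd (sub_eq_zero.mp h') hχ₀g
      · exact h'
  -- total sum of T
  have hTsum : ∑ g : G, T g = (v : ℂ) := by
    rw [hTdef]
    simp only
    rw [Finset.sum_comm]
    rw [Finset.sum_eq_single_of_mem (1 : G →* ℂ) hm1
      (fun χ _ hne => char_sum_eq_zero hne)]
    simp [hv]
  -- the set where T(g⁻¹) ≠ 0
  set S : Finset G := Finset.univ.filter (fun g => T g⁻¹ ≠ 0) with hSdef
  have hmemS : ∀ g ∈ S, T g⁻¹ = (m : ℂ) := by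
    intro g hg
    rcases hTval g⁻¹ with h | h
    · exact absurd h (by simpa [hSdef] using hg)
    · exact h
  have hmC : (m : ℂ) ≠ 0 := Nat.cast_ne_zero.mpr (by omega)
  have h1S : (1 : G) ∈ S := by
    simp only [hSdef, Finset.mem_filter, Finset.mem_univ, true_and, inv_one]
    rw [hT1]; exact hmC
  have hSm : S.card * m = v := by
    have e1 : ∑ g : G, T g⁻¹ = (v : ℂ) := by
      rw [← hTsum]
      exact Fintype.sum_equiv (Equiv.inv G) _ _ (fun g => rfl)
    have e2 : ∑ g ∈ S, T g⁻¹ = (v : ℂ) := by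
      rw [← e1]
      apply Finset.sum_subset (Finset.subset_univ S)
      intro g _ hg
      by_contra h
      exact hg (by simp [hSdef, h])
    have e3 : ((S.card : ℂ)) * m = (v : ℂ) := by
      rw [← e2, Finset.sum_congr rfl hmemS, Finset.sum_const, nsmul_eq_mul]
    exact_mod_cast e3
  -- ## The master identity
  have master : ∀ g : G,
      (v : ℂ) * ((if g ∈ D then 1 else 0) + (if g⁻¹ ∈ D then 1 else 0))
        = 2 * (k : ℂ) + 2 * (r : ℂ) * (T g⁻¹ - 1)
          + s * ((if g = 1 then (v : ℂ) else 0) - T g⁻¹) := by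
    intro g
    have expand : ∀ χ : G →* ℂ, (cD χ + (starRingEnd ℂ) (cD χ)) * χ g⁻¹
        = ∑ d ∈ D, (χ d * χ g⁻¹ + χ d⁻¹ * χ g⁻¹) := by
      intro χ
      have hconj : (starRingEnd ℂ) (cD χ) = ∑ d ∈ D, χ d⁻¹ := by
        rw [hcDdef]
        simp only [map_sum]
        exact Finset.sum_congr rfl fun d _ => char_conj χ d
      rw [hconj, hcDdef]
      simp only
      rw [← Finset.sum_add_distrib, Finset.sum_mul]
      exact Finset.sum_congr rfl fun d _ => add_mul _ _ _
    have way1 : ∑ χ : G →* ℂ, (cD χ + (starRingEnd ℂ) (cD χ)) * χ g⁻¹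
        = (v : ℂ) * ((if g ∈ D then 1 else 0) + (if g⁻¹ ∈ D then 1 else 0)) := by
      simp_rw [expand]
      rw [Finset.sum_comm]
      have inner : ∀ d ∈ D, ∑ χ : G →* ℂ, (χ d * χ g⁻¹ + χ d⁻¹ * χ g⁻¹)
          = (if d = g then (v : ℂ) else 0) + (if d = g⁻¹ then (v : ℂ) else 0) := by
        intro d _
        rw [Finset.sum_add_distrib, dual_orth hsep d g, dual_orth hsep d⁻¹ g, hcard]
        congr 1
        simp [inv_eq_iff_eq_inv]
      rw [Finset.sum_congr rfl inner, Finset.sum_add_distrib,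
        Finset.sum_ite_eq' D g (fun _ => (v : ℂ)),
        Finset.sum_ite_eq' D g⁻¹ (fun _ => (v : ℂ))]
      split_ifs <;> ring
    have hMfpart : ∑ χ ∈ Mf, (cD χ + (starRingEnd ℂ) (cD χ)) * χ g⁻¹
        = 2 * (k : ℂ) + 2 * (r : ℂ) * (T g⁻¹ - 1) := by
      rw [← Finset.add_sum_erase _ _ hm1]
      have h1 : (cD 1 + (starRingEnd ℂ) (cD 1)) * (1 : G →* ℂ) g⁻¹ = 2 * (k : ℂ) := by
        have hcD1 : cD 1 = (k : ℂ) := by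
          rw [hcDdef]; simp [hk]
        rw [hcD1]
        simp only [MonoidHom.one_apply, mul_one, Complex.conj_natCast]
        ring
      have h2 : ∀ χ ∈ Mf.erase 1,
          (cD χ + (starRingEnd ℂ) (cD χ)) * χ g⁻¹ = (2 * (r : ℂ)) * χ g⁻¹ := by
        intro χ hχ
        obtain ⟨hne, hmem⟩ := Finset.mem_erase.mp hχ
        have hcDr : cD χ = (r : ℂ) :=
          (((hMmem χ).mp ((hMf χ).mp hmem)).resolve_left hne).2
        rw [hcDr]
        simp only [Complex.conj_natCast]
        ring
      rw [h1, Finset.sum_congr rfl h2, ← Finset.mul_sum]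
      have h3 : ∑ χ ∈ Mf.erase 1, χ g⁻¹ = T g⁻¹ - 1 := by
        have h4 := Finset.add_sum_erase Mf (fun χ : G →* ℂ => χ g⁻¹) hm1
        simp only [MonoidHom.one_apply] at h4
        rw [hTdef]
        simp only
        linear_combination h4
      rw [h3]
    have hcompl : ∑ χ ∈ Mfᶜ, (cD χ + (starRingEnd ℂ) (cD χ)) * χ g⁻¹
        = s * ((if g = 1 then (v : ℂ) else 0) - T g⁻¹) := by
      have h2 : ∀ χ ∈ Mfᶜ, (cD χ + (starRingEnd ℂ) (cD χ)) * χ g⁻¹ = s * χ g⁻¹ := by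
        intro χ hχ
        have hχM : χ ∉ M := fun h => (Finset.mem_compl.mp hχ) ((hMf χ).mpr h)
        have hχ1 : χ ≠ 1 := fun h => hχM (h ▸ h1M)
        have hne_r : cD χ ≠ (r : ℂ) := fun h => hχM ((hMmem χ).mpr (Or.inr ⟨hχ1, h⟩))
        rcases hvals' χ hχ1 with h | h | h
        · exact absurd h hne_r
        · rw [h, hsdef, hc]
        · rw [h, hsdef, hc, Complex.conj_conj]
          ring
      rw [Finset.sum_congr rfl h2, ← Finset.mul_sum]
      congr 1
      have htot : ∑ χ : G →* ℂ, χ g⁻¹ = (if g = 1 then (v : ℂ) else 0) := by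
        have h5 := dual_orth hsep 1 g
        simp only [map_one, one_mul] at h5
        rw [hcard] at h5
        rw [h5]
        congr 1
        simp [eq_comm]
      have hsplit := Finset.sum_add_sum_compl Mf (fun χ : G →* ℂ => χ g⁻¹)
      rw [hTdef]
      simp only
      linear_combination htot + hsplit
    rw [← way1, ← Finset.sum_add_sum_compl Mf, hMfpart, hcompl]
  -- ## Difference set counting: k² = k + (v-1)λ
  have hv1 : 1 ≤ v := hv ▸ Fintype.card_pos
  have hkv : k ≤ v := by
    rw [← hk, ← hv]
    exact Finset.card_le_univ D
  have hL1 : k * k = k + (v - 1) * lam := by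
    have hfib : (D ×ˢ D).card
        = ∑ g : G, ((D ×ˢ D).filter (fun p => p.1 * p.2⁻¹ = g)).card :=
      Finset.card_eq_sum_card_fiberwise (fun x _ => Finset.mem_univ _)
    have hdiag : ((D ×ˢ D).filter (fun p => p.1 * p.2⁻¹ = 1))
        = D.image (fun d => (d, d)) := by
      ext p
      simp only [Finset.mem_filter, Finset.mem_product, Finset.mem_image, mul_inv_eq_one]
      constructor
      · rintro ⟨⟨h1, h2⟩, h3⟩
        exact ⟨p.1, h1, by rw [Prod.ext_iff]; exact ⟨rfl, h3⟩⟩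
      · rintro ⟨d, hd, rfl⟩
        exact ⟨⟨hd, hd⟩, rfl⟩
    have hcount : ∑ g : G, ((D ×ˢ D).filter (fun p => p.1 * p.2⁻¹ = g)).card
        = k + (v - 1) * lam := by
      rw [← Finset.add_sum_erase _ _ (Finset.mem_univ (1 : G))]
      congr 1
      · rw [hdiag, Finset.card_image_of_injective _
          (fun x y h => by simpa using congrArg Prod.fst h)]
        exact hk
      · rw [Finset.sum_congr rfl (fun g hg => hDS g (Finset.mem_erase.mp hg).1),
          Finset.sum_const, Finset.card_erase_of_mem (Finset.mem_univ 1),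
          Finset.card_univ, hv, smul_eq_mul]
    rw [hcount, Finset.card_product, hk] at hfib
    exact hfib
  have hn1 : 1 ≤ n := by omega
  have hr1 : 1 ≤ r := by
    rcases Nat.eq_zero_or_pos r with h | h
    · rw [h] at hr; simp at hr; omega
    · exact h
  have hkr : r < k := by
    by_contra hcon
    push_neg at hcon
    have h1 : k * k ≤ r * r := Nat.mul_le_mul hcon hcon
    have h2 : r * r = n := by rw [← hr]; ring
    have h3 : k ≤ k * k := Nat.le_mul_of_pos_left k (by omega)
    omega
  -- ## First conclusion: v = 2(k - r)
  have hveqZ : (v : ℤ) = 2 * ((k : ℤ) - (r : ℤ)) := by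
    obtain ⟨g₀, hg₀S⟩ : ∃ g₀ : G, g₀ ∉ S := by
      by_contra h
      push_neg at h
      have he : S = Finset.univ := Finset.eq_univ_iff_forall.mpr h
      rw [he, Finset.card_univ, hv] at hSm
      nlinarith
    have hg₀1 : g₀ ≠ 1 := fun h => hg₀S (h ▸ h1S)
    have hT0 : T g₀⁻¹ = 0 := by
      rcases hTval g₀⁻¹ with h | h
      · exact h
      · exfalso
        apply hg₀S
        simp only [hSdef, Finset.mem_filter, Finset.mem_univ, true_and, h]
        exact hmC
    have hmg := master g₀
    rw [hT0, if_neg hg₀1] at hmg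
    have hmg' : (v : ℂ) * ((if g₀ ∈ D then 1 else 0) + (if g₀⁻¹ ∈ D then 1 else 0))
        = 2 * (k : ℂ) - 2 * (r : ℂ) := by
      rw [hmg]; ring
    split_ifs at hmg' with h1 h2 h2
    · have hZ : (v : ℤ) * (1 + 1) = 2 * (k : ℤ) - 2 * (r : ℤ) := by exact_mod_cast hmg'
      omega
    · have hZ : (v : ℤ) * (1 + 0) = 2 * (k : ℤ) - 2 * (r : ℤ) := by exact_mod_cast hmg'
      omega
    · have hZ : (v : ℤ) * (0 + 1) = 2 * (k : ℤ) - 2 * (r : ℤ) := by exact_mod_cast hmg'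
      omega
    · have hZ : (v : ℤ) * (0 + 0) = 2 * (k : ℤ) - 2 * (r : ℤ) := by exact_mod_cast hmg'
      omega
  -- ## Parameters
  have hL1Z : (k : ℤ) * k = k + ((v : ℤ) - 1) * lam := by
    have := hL1
    zify [hv1] at this
    exact this
  have hnZ : (n : ℤ) = (k : ℤ) - lam := by omega
  have hrZ : (r : ℤ) * r = n := by exact_mod_cast (by rw [← hr]; ring : r * r = n)
  have hklam : (k : ℤ) + r = 2 * lam := by
    have h0 : ((k : ℤ) - r) * ((k : ℤ) + r - 2 * lam) = 0 := by
      linear_combination hL1Z - hrZ - hnZ + (lam : ℤ) * hveqZ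
    rcases mul_eq_zero.mp h0 with h | h
    · exfalso
      have : (k : ℤ) ≠ r := by omega
      exact this (by linarith)
    · linarith
  have hv4 : v = 4 * n := by omega
  have hk2 : k = 2 * n + r := by omega
  have hlamnr : lam = n + r := by omega
  refine ⟨hveqZ, hv4, hk2, hlamnr, ?_⟩
  -- ## Finally: a + conj a = 0
  have hnormSq : a.re ^ 2 + a.im ^ 2 = (n : ℝ) := by
    have h' : ((Complex.normSq a : ℝ) : ℂ) = ((n : ℝ) : ℂ) := by
      rw [← Complex.mul_conj]
      push_cast
      exact ha
    have h'' : Complex.normSq a = (n : ℝ) := by exact_mod_cast h'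
    rw [← h'', Complex.normSq_apply]
    ring
  have him : a.im ≠ 0 := by
    intro h
    exact haa (Complex.conj_eq_iff_im.mpr h).symm
  have him2 : 0 < a.im * a.im := mul_self_pos.mpr him
  have hrR : (r : ℝ) * r = (n : ℝ) := by exact_mod_cast hrZ
  have hrelt : a.re < (r : ℝ) := by
    nlinarith [hnormSq, him2, hrR, Nat.cast_nonneg (α := ℝ) r, sq_nonneg (a.re + (r : ℝ))]
  have hs : s = ((2 * a.re : ℝ) : ℂ) := by
    rw [hsdef, hc]
    exact Complex.add_conj a
  have hveqR : (v : ℝ) = 2 * (k : ℝ) - 2 * (r : ℝ) := by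
    have h : ((v : ℤ) : ℝ) = ((2 * ((k : ℤ) - (r : ℤ)) : ℤ) : ℝ) := by rw [hveqZ]
    push_cast at h
    linarith
  have hvR1 : (1 : ℝ) ≤ (v : ℝ) := by exact_mod_cast hv1
  have hmR1 : (1 : ℝ) ≤ (m : ℝ) := by exact_mod_cast hm0
  -- a point `g₁ ≠ 1` with `T g₁⁻¹ = m`
  have hScard2 : 2 ≤ S.card := by
    by_contra h
    push_neg at h
    have h1 : 1 ≤ S.card := Finset.card_pos.mpr ⟨1, h1S⟩
    have h2 : S.card = 1 := by omega
    rw [h2, one_mul] at hSm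
    omega
  obtain ⟨g₁, hg₁⟩ := Finset.card_pos.mp
    (show 0 < (S.erase 1).card by rw [Finset.card_erase_of_mem h1S]; omega)
  obtain ⟨hg₁1, hg₁S⟩ := Finset.mem_erase.mp hg₁
  have hTm : T g₁⁻¹ = (m : ℂ) := hmemS g₁ hg₁S
  have hmg := master g₁
  rw [hTm, if_neg hg₁1, hs] at hmg
  have hpos : 0 < (2 * (r : ℝ) - 2 * a.re) * m := by
    apply mul_pos
    · linarith
    · linarith
  have key1 : (2 * (r : ℝ) - 2 * a.re) * m = (v : ℝ) := by
    split_ifs at hmg with h1 h2 h2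
    · have hR : (v : ℝ) * (1 + 1)
          = 2 * k + 2 * r * ((m : ℝ) - 1) + (2 * a.re) * (0 - m) := by
        exact_mod_cast hmg
      linear_combination hveqR - hR
    · have hR : (v : ℝ) * (1 + 0)
          = 2 * k + 2 * r * ((m : ℝ) - 1) + (2 * a.re) * (0 - m) := by
        exact_mod_cast hmg
      exfalso
      have h0 : (2 * (r : ℝ) - 2 * a.re) * m = 0 := by linear_combination hveqR - hR
      linarith
    · have hR : (v : ℝ) * (0 + 1)
          = 2 * k + 2 * r * ((m : ℝ) - 1) + (2 * a.re) * (0 - m) := by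
        exact_mod_cast hmg
      exfalso
      have h0 : (2 * (r : ℝ) - 2 * a.re) * m = 0 := by linear_combination hveqR - hR
      linarith
    · have hR : (v : ℝ) * (0 + 0)
          = 2 * k + 2 * r * ((m : ℝ) - 1) + (2 * a.re) * (0 - m) := by
        exact_mod_cast hmg
      exfalso
      have h0 : (2 * (r : ℝ) - 2 * a.re) * m = -(v : ℝ) := by
        linear_combination hveqR - hR
      linarith
  -- the identity at g = 1
  have hmg1 := master 1
  rw [inv_one, hT1, if_pos rfl, hs] at hmg1
  by_cases h1D : (1 : G) ∈ D
  · rw [if_pos h1D] at hmg1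
    have hR : (v : ℝ) * (1 + 1)
        = 2 * k + 2 * r * ((m : ℝ) - 1) + (2 * a.re) * ((v : ℝ) - m) := by
      exact_mod_cast hmg1
    have htv : (2 * a.re) * (v : ℝ) = 0 := by
      linear_combination hveqR - hR - key1
    have hre0 : a.re = 0 := by
      rcases mul_eq_zero.mp htv with h | h
      · linarith
      · exfalso; linarith
    rw [hs, hre0]
    norm_num
  · exfalso
    rw [if_neg h1D] at hmg1
    have hR : (v : ℝ) * (0 + 0)
        = 2 * k + 2 * r * ((m : ℝ) - 1) + (2 * a.re) * ((v : ℝ) - m) := by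
      exact_mod_cast hmg1
    have htv : (2 * a.re) * (v : ℝ) = -2 * (v : ℝ) := by
      linear_combination hveqR - hR - key1
    have hre : a.re = -1 := by
      have h0 : ((2 * a.re) - (-2)) * (v : ℝ) = 0 := by linear_combination htv
      rcases mul_eq_zero.mp h0 with h | h
      · linarith
      · exfalso; linarith
    -- (2r+2) * m = v  in ℕ
    have hnatR : ((2 * r + 2 : ℕ) : ℝ) * ((m : ℕ) : ℝ) = ((v : ℕ) : ℝ) := by
      push_cast
      rw [hre] at key1
      linarith [key1]
    have hnat : (2 * r + 2) * m = v := by exact_mod_cast hnatR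
    have h7 : 2 * ((r + 1) * m) = 2 * (2 * (r * r)) := by
      calc 2 * ((r + 1) * m) = (2 * r + 2) * m := by ring
        _ = v := hnat
        _ = 4 * n := hv4
        _ = 4 * (r * r) := by rw [← hr]; ring
        _ = 2 * (2 * (r * r)) := by ring
    have h6 : (r + 1) * m = 2 * (r * r) := Nat.eq_of_mul_eq_mul_left (by norm_num) h7
    have hdvd : (r + 1) ∣ 2 := by
      have hdv : (r + 1) ∣ 2 * (r * r) := ⟨m, h6.symm⟩
      obtain ⟨r', rfl⟩ : ∃ r', r = r' + 1 := ⟨r - 1, by omega⟩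
      have hID : 2 * ((r' + 1) * (r' + 1)) = (r' + 1 + 1) * (2 * r') + 2 := by ring
      rw [hID] at hdv
      exact (Nat.dvd_add_right ⟨2 * r', rfl⟩).mp hdv
    have hrle : r + 1 ≤ 2 := Nat.le_of_dvd (by norm_num) hdvd
    have hreq : r = 1 := by omega
    have hneq : n = 1 := by rw [← hr, hreq]; norm_num
    rw [hneq, hre] at hnormSq
    push_cast at hnormSq
    nlinarith [him2]
end
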